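/- arXiv:1509.07204 — 2 statements merged into one kernel-verified Lean document; each statement's English description precedes it below -/
import Mathlib

section
/- Bisimulation invariance of modal inclusion logic: every MINC-formula φ is invariant under team k-bisimulation for k = md(φ); that is, if K,T ⊨ φ and K,T [⇄_k] K',T', then K',T' ⊨ φ. -/
namespace TeamSem

structure KripkeModel (Φ : Type) where
  W : Type
  R : W → W → Prop
  V : Φ → Set W

variable {Φ : Type}

/-- Image `R[T]` of a team under the accessibility relation. -/
def img (K : KripkeModel Φ) (T : Set K.W) : Set K.W := {v | ∃ w ∈ T, K.R w v}

/-- Preimage `R⁻¹[S]`. -/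
def preimg (K : KripkeModel Φ) (S : Set K.W) : Set K.W := {w | ∃ v ∈ S, K.R w v}

/-- `T[R]S` : `S ⊆ R[T]` and `T ⊆ R⁻¹[S]`. -/
def relStep (K : KripkeModel Φ) (T S : Set K.W) : Prop :=
  S ⊆ img K T ∧ T ⊆ preimg K S

/-- ML formulas in negation normal form. -/
inductive MLFormula (Φ : Type) where
  | atom : Φ → MLFormula Φ
  | natom : Φ → MLFormula Φ
  | and : MLFormula Φ → MLFormula Φ → MLFormula Φ
  | or : MLFormula Φ → MLFormula Φ → MLFormula Φ
  | dia : MLFormula Φ → MLFormula Φ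
  | box : MLFormula Φ → MLFormula Φ

/-- Lax team semantics for ML. -/
def mlSat (K : KripkeModel Φ) : MLFormula Φ → Set K.W → Prop
  | .atom p, T => T ⊆ K.V p
  | .natom p, T => T ∩ K.V p = ∅
  | .and φ ψ, T => mlSat K φ T ∧ mlSat K ψ T
  | .or φ ψ, T => ∃ T₁ T₂, T = T₁ ∪ T₂ ∧ mlSat K φ T₁ ∧ mlSat K ψ T₂
  | .dia φ, T => ∃ S, relStep K T S ∧ mlSat K φ S
  | .box φ, T => mlSat K φ (img K T)

/-- Standard single-world Kripke semantics for ML. -/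
def mlSatW (K : KripkeModel Φ) : MLFormula Φ → K.W → Prop
  | .atom p, w => w ∈ K.V p
  | .natom p, w => w ∉ K.V p
  | .and φ ψ, w => mlSatW K φ w ∧ mlSatW K ψ w
  | .or φ ψ, w => mlSatW K φ w ∨ mlSatW K ψ w
  | .dia φ, w => ∃ v, K.R w v ∧ mlSatW K φ v
  | .box φ, w => ∀ v, K.R w v → mlSatW K φ v

/-- Modal depth of an ML formula. -/
def mlMd : MLFormula Φ → ℕ
  | .atom _ => 0
  | .natom _ => 0
  | .and φ ψ => max (mlMd φ) (mlMd ψ)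
  | .or φ ψ => max (mlMd φ) (mlMd ψ)
  | .dia φ => mlMd φ + 1
  | .box φ => mlMd φ + 1

/-- `k`-bisimulation between pointed Kripke models. -/
def bisim (K K' : KripkeModel Φ) : ℕ → K.W → K'.W → Prop
  | 0, w, w' => ∀ p, w ∈ K.V p ↔ w' ∈ K'.V p
  | k + 1, w, w' => (∀ p, w ∈ K.V p ↔ w' ∈ K'.V p) ∧
      (∀ v, K.R w v → ∃ v', K'.R w' v' ∧ bisim K K' k v v') ∧
      (∀ v', K'.R w' v' → ∃ v, K.R w v ∧ bisim K K' k v v')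

/-- Team `k`-bisimilarity: domain and range totality. -/
def teamBisim (K K' : KripkeModel Φ) (k : ℕ) (T : Set K.W) (T' : Set K'.W) : Prop :=
  (∀ w ∈ T, ∃ w' ∈ T', bisim K K' k w w') ∧
  (∀ w' ∈ T', ∃ w ∈ T, bisim K K' k w w')

/-- Formulas of modal inclusion logic MINC. -/
inductive MINCFormula (Φ : Type) where
  | atom : Φ → MINCFormula Φ
  | natom : Φ → MINCFormula Φ
  | and : MINCFormula Φ → MINCFormula Φ → MINCFormula Φ
  | or : MINCFormula Φ → MINCFormula Φ → MINCFormula Φ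
  | dia : MINCFormula Φ → MINCFormula Φ
  | box : MINCFormula Φ → MINCFormula Φ
  | inc : List (MLFormula Φ) → List (MLFormula Φ) → MINCFormula Φ

/-- Team semantics for MINC. -/
def mincSat (K : KripkeModel Φ) : MINCFormula Φ → Set K.W → Prop
  | .atom p, T => T ⊆ K.V p
  | .natom p, T => T ∩ K.V p = ∅
  | .and φ ψ, T => mincSat K φ T ∧ mincSat K ψ T
  | .or φ ψ, T => ∃ T₁ T₂, T = T₁ ∪ T₂ ∧ mincSat K φ T₁ ∧ mincSat K ψ T₂
  | .dia φ, T => ∃ S, relStep K T S ∧ mincSat K φ S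
  | .box φ, T => mincSat K φ (img K T)
  | .inc φs ψs, T => ∀ w ∈ T, ∃ v ∈ T,
      ∀ pr ∈ φs.zip ψs, (mlSatW K pr.1 w ↔ mlSatW K pr.2 v)

/-- Modal depth of a MINC formula. -/
def mincMd : MINCFormula Φ → ℕ
  | .atom _ => 0
  | .natom _ => 0
  | .and φ ψ => max (mincMd φ) (mincMd ψ)
  | .or φ ψ => max (mincMd φ) (mincMd ψ)
  | .dia φ => mincMd φ + 1
  | .box φ => mincMd φ + 1
  | .inc φs ψs => ((φs ++ ψs).map mlMd).foldr max 0

/-- Formulas of ML(▽), modal logic with the nonemptiness operator. -/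
inductive NFormula (Φ : Type) where
  | atom : Φ → NFormula Φ
  | natom : Φ → NFormula Φ
  | and : NFormula Φ → NFormula Φ → NFormula Φ
  | or : NFormula Φ → NFormula Φ → NFormula Φ
  | dia : NFormula Φ → NFormula Φ
  | box : NFormula Φ → NFormula Φ
  | ne : NFormula Φ → NFormula Φ

/-- Team semantics for ML(▽). -/
def nSat (K : KripkeModel Φ) : NFormula Φ → Set K.W → Prop
  | .atom p, T => T ⊆ K.V p
  | .natom p, T => T ∩ K.V p = ∅
  | .and φ ψ, T => nSat K φ T ∧ nSat K ψ T
  | .or φ ψ, T => ∃ T₁ T₂, T = T₁ ∪ T₂ ∧ nSat K φ T₁ ∧ nSat K ψ T₂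
  | .dia φ, T => ∃ S, relStep K T S ∧ nSat K φ S
  | .box φ, T => nSat K φ (img K T)
  | .ne φ, T => T = ∅ ∨ ∃ S, S ⊆ T ∧ S.Nonempty ∧ nSat K φ S

/-- Modal depth of an ML(▽) formula. -/
def nMd : NFormula Φ → ℕ
  | .atom _ => 0
  | .natom _ => 0
  | .and φ ψ => max (nMd φ) (nMd ψ)
  | .or φ ψ => max (nMd φ) (nMd ψ)
  | .dia φ => nMd φ + 1
  | .box φ => nMd φ + 1
  | .ne φ => nMd φ

/-- Number of occurrences of ▽ in an ML(▽) formula. -/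
def nCount : NFormula Φ → ℕ
  | .atom _ => 0
  | .natom _ => 0
  | .and φ ψ => nCount φ + nCount ψ
  | .or φ ψ => nCount φ + nCount ψ
  | .dia φ => nCount φ
  | .box φ => nCount φ
  | .ne φ => nCount φ + 1

/-- Subformula occurrence at a position (path) in the syntax tree. -/
def subAt : NFormula Φ → List ℕ → Option (NFormula Φ)
  | φ, [] => some φ
  | .and θ _, 0 :: l => subAt θ l
  | .and _ η, 1 :: l => subAt η l
  | .or θ _, 0 :: l => subAt θ l
  | .or _ η, 1 :: l => subAt η l
  | .dia θ, 0 :: l => subAt θ l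
  | .box θ, 0 :: l => subAt θ l
  | .ne θ, 0 :: l => subAt θ l
  | _, _ => none

/-- `F` is a winning-strategy labeling of the syntax tree of `φ` for `(K,T)`. -/
def IsWinning (K : KripkeModel Φ) (φ : NFormula Φ) (T : Set K.W)
    (F : List ℕ → Set K.W) : Prop :=
  F [] = T ∧
  ∀ π ψ, subAt φ π = some ψ →
    match ψ with
    | .atom p => F π ⊆ K.V p
    | .natom p => F π ∩ K.V p = ∅
    | .and _ _ => F π = F (π ++ [0]) ∧ F π = F (π ++ [1])
    | .or _ _ => F π = F (π ++ [0]) ∪ F (π ++ [1])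
    | .dia _ => relStep K (F π) (F (π ++ [0]))
    | .box _ => F (π ++ [0]) = img K (F π)
    | .ne _ => F (π ++ [0]) ⊆ F π ∧ (F π ≠ ∅ → F (π ++ [0]) ≠ ∅)


theorem bisim_atoms {K K' : KripkeModel Φ} {k : ℕ} {w : K.W} {w' : K'.W}
    (hb : bisim K K' k w w') : ∀ p, w ∈ K.V p ↔ w' ∈ K'.V p := by
  cases k with
  | zero => exact hb
  | succ k => exact hb.1

theorem bisim_mono {K K' : KripkeModel Φ} :
    ∀ {m k : ℕ} {w : K.W} {w' : K'.W}, m ≤ k → bisim K K' k w w' → bisim K K' m w w' := by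
  intro m
  induction m with
  | zero => intro k w w' _ hb; exact bisim_atoms hb
  | succ m ih =>
    intro k w w' hmk hb
    cases k with
    | zero => omega
    | succ k =>
      refine ⟨hb.1, ?_, ?_⟩
      · intro v hv; obtain ⟨v', hr, hb'⟩ := hb.2.1 v hv
        exact ⟨v', hr, ih (by omega) hb'⟩
      · intro v' hv'; obtain ⟨v, hr, hb'⟩ := hb.2.2 v' hv'
        exact ⟨v, hr, ih (by omega) hb'⟩

theorem teamBisim_mono {K K' : KripkeModel Φ} {m k : ℕ} {T : Set K.W} {T' : Set K'.W}
    (hmk : m ≤ k) (hb : teamBisim K K' k T T') : teamBisim K K' m T T' := by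
  constructor
  · intro w hw; obtain ⟨w', hw', hb'⟩ := hb.1 w hw
    exact ⟨w', hw', bisim_mono hmk hb'⟩
  · intro w' hw'; obtain ⟨w, hw, hb'⟩ := hb.2 w' hw'
    exact ⟨w, hw, bisim_mono hmk hb'⟩

theorem mlSatW_bisim {K K' : KripkeModel Φ} :
    ∀ (φ : MLFormula Φ) {k : ℕ} {w : K.W} {w' : K'.W}, mlMd φ ≤ k →
      bisim K K' k w w' → (mlSatW K φ w ↔ mlSatW K' φ w') := by
  intro φ
  induction φ with
  | atom p => intro k w w' _ hb; exact bisim_atoms hb p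
  | natom p => intro k w w' _ hb; exact not_congr (bisim_atoms hb p)
  | and φ ψ ihφ ihψ =>
    intro k w w' hk hb
    simp only [mlMd, max_le_iff] at hk
    exact and_congr (ihφ hk.1 hb) (ihψ hk.2 hb)
  | or φ ψ ihφ ihψ =>
    intro k w w' hk hb
    simp only [mlMd, max_le_iff] at hk
    exact or_congr (ihφ hk.1 hb) (ihψ hk.2 hb)
  | dia φ ih =>
    intro k w w' hk hb
    cases k with
    | zero => simp [mlMd] at hk
    | succ k =>
      simp only [mlMd, Nat.add_le_add_iff_right] at hk
      constructor
      · rintro ⟨v, hr, hv⟩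
        obtain ⟨v', hr', hb'⟩ := hb.2.1 v hr
        exact ⟨v', hr', (ih hk hb').mp hv⟩
      · rintro ⟨v', hr', hv'⟩
        obtain ⟨v, hr, hb'⟩ := hb.2.2 v' hr'
        exact ⟨v, hr, (ih hk hb').mpr hv'⟩
  | box φ ih =>
    intro k w w' hk hb
    cases k with
    | zero => simp [mlMd] at hk
    | succ k =>
      simp only [mlMd, Nat.add_le_add_iff_right] at hk
      constructor
      · intro h v' hr'
        obtain ⟨v, hr, hb'⟩ := hb.2.2 v' hr'
        exact (ih hk hb').mp (h v hr)
      · intro h v hr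
        obtain ⟨v', hr', hb'⟩ := hb.2.1 v hr
        exact (ih hk hb').mpr (h v' hr')

theorem le_foldr_max {l : List ℕ} {a : ℕ} (h : a ∈ l) : a ≤ l.foldr max 0 := by
  induction l with
  | nil => simp at h
  | cons b l ih =>
    rcases List.mem_cons.mp h with h | h
    · subst h; exact le_max_left _ _
    · exact le_trans (ih h) (le_max_right _ _)

/-- Bisimulation invariance of modal inclusion logic. -/
theorem minc_bisim_invariant (φ : MINCFormula Φ) (K K' : KripkeModel Φ)
    (T : Set K.W) (T' : Set K'.W)
    (h : mincSat K φ T) (hb : teamBisim K K' (mincMd φ) T T') :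
    mincSat K' φ T' := by
  induction φ generalizing T T' with
  | atom p =>
    intro w' hw'
    obtain ⟨w, hw, hbw⟩ := hb.2 w' hw'
    exact (bisim_atoms hbw p).mp (h hw)
  | natom p =>
    ext w'
    simp only [Set.mem_inter_iff, Set.mem_empty_iff_false, iff_false, not_and]
    intro hw' hv'
    obtain ⟨w, hw, hbw⟩ := hb.2 w' hw'
    have : w ∈ T ∩ K.V p := ⟨hw, (bisim_atoms hbw p).mpr hv'⟩
    rw [h] at this; exact this
  | and φ ψ ihφ ihψ =>
    exact ⟨ihφ _ _ h.1 (teamBisim_mono (le_max_left _ _) hb),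
      ihψ _ _ h.2 (teamBisim_mono (le_max_right _ _) hb)⟩
  | or φ ψ ihφ ihψ =>
    obtain ⟨T₁, T₂, hT, h₁, h₂⟩ := h
    set k := mincMd (MINCFormula.or φ ψ) with hk
    have hkφ : mincMd φ ≤ k := by simp [hk, mincMd]
    have hkψ : mincMd ψ ≤ k := by simp [hk, mincMd]
    refine ⟨{w' ∈ T' | ∃ w ∈ T₁, bisim K K' k w w'},
      {w' ∈ T' | ∃ w ∈ T₂, bisim K K' k w w'}, ?_, ?_, ?_⟩
    · ext w'
      simp only [Set.mem_union, Set.mem_setOf_eq]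
      constructor
      · intro hw'
        obtain ⟨w, hw, hbw⟩ := hb.2 w' hw'
        rw [hT] at hw
        rcases hw with hw | hw
        · exact Or.inl ⟨hw', w, hw, hbw⟩
        · exact Or.inr ⟨hw', w, hw, hbw⟩
      · rintro (⟨hw', _⟩ | ⟨hw', _⟩) <;> exact hw'
    · refine ihφ _ _ h₁ (teamBisim_mono hkφ ⟨?_, ?_⟩)
      · intro w hw
        obtain ⟨w', hw', hbw⟩ := hb.1 w (hT ▸ Set.mem_union_left _ hw)
        exact ⟨w', ⟨hw', w, hw, hbw⟩, hbw⟩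
      · rintro w' ⟨_, w, hw, hbw⟩
        exact ⟨w, hw, hbw⟩
    · refine ihψ _ _ h₂ (teamBisim_mono hkψ ⟨?_, ?_⟩)
      · intro w hw
        obtain ⟨w', hw', hbw⟩ := hb.1 w (hT ▸ Set.mem_union_right _ hw)
        exact ⟨w', ⟨hw', w, hw, hbw⟩, hbw⟩
      · rintro w' ⟨_, w, hw, hbw⟩
        exact ⟨w, hw, hbw⟩
  | dia φ ih =>
    obtain ⟨S, ⟨hS₁, hS₂⟩, hSφ⟩ := h
    set k := mincMd φ with hk
    refine ⟨{v' | (∃ w' ∈ T', K'.R w' v') ∧ ∃ v ∈ S, bisim K K' k v v'}, ⟨?_, ?_⟩, ?_⟩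
    · rintro v' ⟨⟨w', hw', hr'⟩, _⟩
      exact ⟨w', hw', hr'⟩
    · intro w' hw'
      obtain ⟨w, hw, hbw⟩ := hb.2 w' hw'
      obtain ⟨v, hv, hr⟩ := hS₂ hw
      obtain ⟨v', hr', hb'⟩ := hbw.2.1 v hr
      exact ⟨v', ⟨⟨w', hw', hr'⟩, v, hv, hb'⟩, hr'⟩
    · refine ih _ _ hSφ ⟨?_, ?_⟩
      · intro v hv
        obtain ⟨w, hw, hr⟩ := hS₁ hv
        obtain ⟨w', hw', hbw⟩ := hb.1 w hw
        obtain ⟨v', hr', hb'⟩ := hbw.2.1 v hr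
        exact ⟨v', ⟨⟨w', hw', hr'⟩, v, hv, hb'⟩, hb'⟩
      · rintro v' ⟨_, v, hv, hb'⟩
        exact ⟨v, hv, hb'⟩
  | box φ ih =>
    refine ih _ _ h ⟨?_, ?_⟩
    · rintro v ⟨w, hw, hr⟩
      obtain ⟨w', hw', hbw⟩ := hb.1 w hw
      obtain ⟨v', hr', hb'⟩ := hbw.2.1 v hr
      exact ⟨v', ⟨w', hw', hr'⟩, hb'⟩
    · rintro v' ⟨w', hw', hr'⟩
      obtain ⟨w, hw, hbw⟩ := hb.2 w' hw'
      obtain ⟨v, hr, hb'⟩ := hbw.2.2 v' hr'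
      exact ⟨v, ⟨w, hw, hr⟩, hb'⟩
  | inc φs ψs =>
    intro w' hw'
    obtain ⟨w, hw, hbw⟩ := hb.2 w' hw'
    obtain ⟨v, hv, hiff⟩ := h w hw
    obtain ⟨v', hv', hbv⟩ := hb.1 v hv
    refine ⟨v', hv', ?_⟩
    intro pr hpr
    obtain ⟨h1, h2⟩ := List.of_mem_zip hpr
    have hd1 : mlMd pr.1 ≤ mincMd (MINCFormula.inc φs ψs) :=
      le_foldr_max (List.mem_map_of_mem (f := mlMd) (List.mem_append_left _ h1))
    have hd2 : mlMd pr.2 ≤ mincMd (MINCFormula.inc φs ψs) :=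
      le_foldr_max (List.mem_map_of_mem (f := mlMd) (List.mem_append_right _ h2))
    calc mlSatW K' pr.1 w' ↔ mlSatW K pr.1 w := (mlSatW_bisim pr.1 hd1 hbw).symm
      _ ↔ mlSatW K pr.2 v := hiff pr hpr
      _ ↔ mlSatW K' pr.2 v' := mlSatW_bisim pr.2 hd2 hbv

end TeamSem
end

section
/- Team-bisimilarity definability in MINC: for every finite Φ, k ∈ ℕ, and pair (K,T), there is a MINC(Φ)-formula ψ^k_{K,T} such that for all (K',T'): K',T' ⊨ ψ^k_{K,T} if and only if K,T [⇄_k] K',T' or T' = ∅. (For T ≠ ∅ the formula η^k_{K,T} ∧ ⋀_{u,v∈T} (χ^k_{K,u} ⊆ χ^k_{K,v}) works, where η^k_{K,T} = ⋁_{w∈T} χ^k_{K,w}.) -/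
namespace TeamSem

variable {Φ : Type}

/-! ### Auxiliary machinery for the definability theorem -/

section Aux

attribute [local instance] Classical.propDecidable

/-- Hintikka `k`-types over `Φ`. -/
def MType (Φ : Type) : ℕ → Type
  | 0 => Set Φ
  | k + 1 => Set Φ × Set (MType Φ k)

instance mtypeFinite (Φ : Type) [Finite Φ] : ∀ k, Finite (MType Φ k)
  | 0 => by show Finite (Set Φ); infer_instance
  | k + 1 => by
      haveI := mtypeFinite Φ k
      show Finite (Set Φ × Set (MType Φ k)); infer_instance

/-- First component of a successor type. -/
def mtA {k : ℕ} (t : MType Φ (k + 1)) : Set Φ :=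
  (show Set Φ × Set (MType Φ k) from t).1

/-- Second component of a successor type. -/
def mtB {k : ℕ} (t : MType Φ (k + 1)) : Set (MType Φ k) :=
  (show Set Φ × Set (MType Φ k) from t).2

/-- The `k`-type of a world. -/
def typeOf (K : KripkeModel Φ) : (k : ℕ) → K.W → MType Φ k
  | 0, w => show Set Φ from {p | w ∈ K.V p}
  | k + 1, w => show Set Φ × Set (MType Φ k) from
      ({p | w ∈ K.V p}, {t | ∃ v, K.R w v ∧ typeOf K k v = t})

lemma typeOf_zero_eq_iff (K : KripkeModel Φ) (w : K.W) (t : MType Φ 0) :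
    typeOf K 0 w = t ↔ ∀ p, w ∈ K.V p ↔ p ∈ (show Set Φ from t) := by
  constructor
  · intro h p
    have h' : ({p | w ∈ K.V p} : Set Φ) = (show Set Φ from t) := h
    exact Set.ext_iff.1 h' p
  · intro h
    show ({p | w ∈ K.V p} : Set Φ) = (show Set Φ from t)
    exact Set.ext fun p => h p

lemma typeOf_succ_eq_iff (K : KripkeModel Φ) (k : ℕ) (w : K.W) (t : MType Φ (k + 1)) :
    typeOf K (k + 1) w = t ↔
      ({p | w ∈ K.V p} : Set Φ) = mtA t ∧
      ({s | ∃ v, K.R w v ∧ typeOf K k v = s} : Set (MType Φ k)) = mtB t := by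
  constructor
  · intro h
    have h' : ((({p | w ∈ K.V p}, {s | ∃ v, K.R w v ∧ typeOf K k v = s}) :
        Set Φ × Set (MType Φ k))) = (show Set Φ × Set (MType Φ k) from t) := h
    exact ⟨congrArg Prod.fst h', congrArg Prod.snd h'⟩
  · rintro ⟨h1, h2⟩
    show ((({p | w ∈ K.V p}, {s | ∃ v, K.R w v ∧ typeOf K k v = s}) :
        Set Φ × Set (MType Φ k))) = (show Set Φ × Set (MType Φ k) from t)
    rw [show ({p | w ∈ K.V p} : Set Φ) = mtA t from h1,
        show ({s | ∃ v, K.R w v ∧ typeOf K k v = s} : Set (MType Φ k)) = mtB t from h2]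
    rfl

lemma typeOf_eq_iff_bisim (K K' : KripkeModel Φ) : ∀ (k : ℕ) (w : K.W) (w' : K'.W),
    typeOf K k w = typeOf K' k w' ↔ bisim K K' k w w'
  | 0, w, w' => by
    constructor
    · intro h
      show ∀ p, w ∈ K.V p ↔ w' ∈ K'.V p
      intro p
      have h' : ({p | w ∈ K.V p} : Set Φ) = ({p | w' ∈ K'.V p} : Set Φ) := h
      exact Set.ext_iff.1 h' p
    · intro h
      have h' : ∀ p, w ∈ K.V p ↔ w' ∈ K'.V p := h
      show ({p | w ∈ K.V p} : Set Φ) = ({p | w' ∈ K'.V p} : Set Φ)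
      exact Set.ext fun p => h' p
  | k + 1, w, w' => by
    rw [typeOf_succ_eq_iff]
    have hA : mtA (typeOf K' (k + 1) w') = {p | w' ∈ K'.V p} := rfl
    have hB : mtB (typeOf K' (k + 1) w') =
        {s | ∃ v', K'.R w' v' ∧ typeOf K' k v' = s} := rfl
    rw [hA, hB]
    constructor
    · rintro ⟨h1, h2⟩
      have h1' := Set.ext_iff.1 h1
      have h2' := Set.ext_iff.1 h2
      show (∀ p, w ∈ K.V p ↔ w' ∈ K'.V p) ∧
          (∀ v, K.R w v → ∃ v', K'.R w' v' ∧ bisim K K' k v v') ∧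
          (∀ v', K'.R w' v' → ∃ v, K.R w v ∧ bisim K K' k v v')
      refine ⟨fun p => h1' p, fun v hv => ?_, fun v' hv' => ?_⟩
      · have hm : typeOf K k v ∈ ({s | ∃ v, K.R w v ∧ typeOf K k v = s} : Set (MType Φ k)) :=
          ⟨v, hv, rfl⟩
        obtain ⟨v', hv', he⟩ := (h2' (typeOf K k v)).1 hm
        exact ⟨v', hv', (typeOf_eq_iff_bisim K K' k v v').1 he.symm⟩
      · have hm : typeOf K' k v' ∈
            ({s | ∃ v', K'.R w' v' ∧ typeOf K' k v' = s} : Set (MType Φ k)) := ⟨v', hv', rfl⟩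
        obtain ⟨v, hv, he⟩ := (h2' (typeOf K' k v')).2 hm
        exact ⟨v, hv, (typeOf_eq_iff_bisim K K' k v v').1 he⟩
    · intro h
      have h' : (∀ p, w ∈ K.V p ↔ w' ∈ K'.V p) ∧
          (∀ v, K.R w v → ∃ v', K'.R w' v' ∧ bisim K K' k v v') ∧
          (∀ v', K'.R w' v' → ∃ v, K.R w v ∧ bisim K K' k v v') := h
      obtain ⟨h0, hf, hb⟩ := h'
      refine ⟨Set.ext fun p => h0 p, Set.ext fun s => ?_⟩
      simp only [Set.mem_setOf_eq]
      constructor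
      · rintro ⟨v, hv, rfl⟩
        obtain ⟨v', hv', hbis⟩ := hf v hv
        exact ⟨v', hv', ((typeOf_eq_iff_bisim K K' k v v').2 hbis).symm⟩
      · rintro ⟨v', hv', rfl⟩
        obtain ⟨v, hv, hbis⟩ := hb v' hv'
        exact ⟨v, hv, (typeOf_eq_iff_bisim K K' k v v').2 hbis⟩

/-- List enumerating a set over a finite type. -/
noncomputable def setList {α : Type*} [Finite α] (s : Set α) : List α :=
  s.toFinite.toFinset.toList

lemma mem_setList {α : Type*} [Finite α] (s : Set α) (a : α) :
    a ∈ setList s ↔ a ∈ s := by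
  simp [setList]

/-- A tautology of ML. -/
noncomputable def mlTop (Φ : Type) [Nonempty Φ] : MLFormula Φ :=
  .or (.atom (Classical.arbitrary Φ)) (.natom (Classical.arbitrary Φ))

lemma mlSatW_mlTop [Nonempty Φ] (K : KripkeModel Φ) (w : K.W) :
    mlSatW K (mlTop Φ) w := by
  show w ∈ K.V (Classical.arbitrary Φ) ∨ w ∉ K.V (Classical.arbitrary Φ)
  exact Classical.em _

/-- A contradiction of ML. -/
noncomputable def mlBot (Φ : Type) [Nonempty Φ] : MLFormula Φ :=
  .and (.atom (Classical.arbitrary Φ)) (.natom (Classical.arbitrary Φ))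

lemma mlSatW_mlBot [Nonempty Φ] (K : KripkeModel Φ) (w : K.W) :
    ¬ mlSatW K (mlBot Φ) w := by
  intro h
  have h' : w ∈ K.V (Classical.arbitrary Φ) ∧ w ∉ K.V (Classical.arbitrary Φ) := h
  exact h'.2 h'.1

/-- Conjunction of a list of ML formulas. -/
noncomputable def mlConj [Nonempty Φ] (L : List (MLFormula Φ)) : MLFormula Φ :=
  L.foldr MLFormula.and (mlTop Φ)

lemma mlSatW_mlConj [Nonempty Φ] (K : KripkeModel Φ) (L : List (MLFormula Φ)) (w : K.W) :
    mlSatW K (mlConj L) w ↔ ∀ φ ∈ L, mlSatW K φ w := by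
  induction L with
  | nil =>
    simp only [List.not_mem_nil, false_implies, implies_true, iff_true]
    exact mlSatW_mlTop K w
  | cons φ l ih =>
    rw [show mlConj (φ :: l) = .and φ (mlConj l) from rfl]
    show (mlSatW K φ w ∧ mlSatW K (mlConj l) w) ↔ _
    rw [ih, List.forall_mem_cons]

/-- Disjunction of a list of ML formulas. -/
noncomputable def mlDisj [Nonempty Φ] (L : List (MLFormula Φ)) : MLFormula Φ :=
  L.foldr MLFormula.or (mlBot Φ)

lemma mlSatW_mlDisj [Nonempty Φ] (K : KripkeModel Φ) (L : List (MLFormula Φ)) (w : K.W) :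
    mlSatW K (mlDisj L) w ↔ ∃ φ ∈ L, mlSatW K φ w := by
  induction L with
  | nil =>
    simp only [List.not_mem_nil, false_and, exists_false, iff_false]
    exact mlSatW_mlBot K w
  | cons φ l ih =>
    rw [show mlDisj (φ :: l) = .or φ (mlDisj l) from rfl]
    show (mlSatW K φ w ∨ mlSatW K (mlDisj l) w) ↔ _
    rw [ih]
    constructor
    · rintro (h | ⟨ψ, hψ, hs⟩)
      · exact ⟨φ, List.mem_cons_self, h⟩
      · exact ⟨ψ, List.mem_cons_of_mem φ hψ, hs⟩
    · rintro ⟨ψ, hψ, hs⟩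
      rcases List.mem_cons.1 hψ with rfl | hm
      · exact Or.inl hs
      · exact Or.inr ⟨ψ, hm, hs⟩

/-- Characteristic formula of a propositional type. -/
noncomputable def typeFormula0 [Fintype Φ] [Nonempty Φ] (A : Set Φ) : MLFormula Φ :=
  mlConj ((Finset.univ : Finset Φ).toList.map fun p =>
    if p ∈ A then MLFormula.atom p else MLFormula.natom p)

lemma mlSatW_typeFormula0 [Fintype Φ] [Nonempty Φ] (K : KripkeModel Φ)
    (A : Set Φ) (w : K.W) :
    mlSatW K (typeFormula0 A) w ↔ ∀ p, w ∈ K.V p ↔ p ∈ A := by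
  rw [typeFormula0, mlSatW_mlConj]
  constructor
  · intro h p
    have hp := h _ (List.mem_map.2 ⟨p, by simp, rfl⟩)
    by_cases hA : p ∈ A
    · rw [if_pos hA] at hp
      exact ⟨fun _ => hA, fun _ => hp⟩
    · rw [if_neg hA] at hp
      exact ⟨fun hw => absurd hw hp, fun hA' => absurd hA' hA⟩
  · intro h φ hφ
    obtain ⟨p, -, rfl⟩ := List.mem_map.1 hφ
    by_cases hA : p ∈ A
    · rw [if_pos hA]
      exact (h p).2 hA
    · rw [if_neg hA]
      show w ∉ K.V p
      exact fun hw => hA ((h p).1 hw)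

/-- Characteristic (Hintikka) formula of a `k`-type. -/
noncomputable def typeFormula [Fintype Φ] [Nonempty Φ] : (k : ℕ) → MType Φ k → MLFormula Φ
  | 0, t => typeFormula0 (show Set Φ from t)
  | k + 1, t =>
      .and (typeFormula0 (mtA t))
        (.and (mlConj ((setList (mtB t)).map fun s => .dia (typeFormula k s)))
              (.box (mlDisj ((setList (mtB t)).map fun s => typeFormula k s))))

lemma mlSatW_typeFormula [Fintype Φ] [Nonempty Φ] (K : KripkeModel Φ) :
    ∀ (k : ℕ) (t : MType Φ k) (w : K.W),
      mlSatW K (typeFormula k t) w ↔ typeOf K k w = t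
  | 0, t, w => by
    rw [typeOf_zero_eq_iff]
    exact mlSatW_typeFormula0 K _ w
  | k + 1, t, w => by
    rw [typeOf_succ_eq_iff]
    have hred : mlSatW K (typeFormula (k + 1) t) w ↔
        (mlSatW K (typeFormula0 (mtA t)) w ∧
         mlSatW K (mlConj ((setList (mtB t)).map fun s => .dia (typeFormula k s))) w ∧
         ∀ v, K.R w v →
           mlSatW K (mlDisj ((setList (mtB t)).map fun s => typeFormula k s)) v) := Iff.rfl
    rw [hred, mlSatW_typeFormula0, mlSatW_mlConj]
    constructor
    · rintro ⟨h0, h1, h2⟩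
      refine ⟨Set.ext fun p => h0 p, Set.ext fun s => ?_⟩
      simp only [Set.mem_setOf_eq]
      constructor
      · rintro ⟨v, hv, rfl⟩
        have hd := h2 v hv
        rw [mlSatW_mlDisj] at hd
        obtain ⟨φ, hφ, hs⟩ := hd
        obtain ⟨s, hsB, rfl⟩ := List.mem_map.1 hφ
        have := (mlSatW_typeFormula K k s v).1 hs
        rw [this]
        exact (mem_setList _ _).1 hsB
      · intro hs
        have hd := h1 _ (List.mem_map.2 ⟨s, (mem_setList _ _).2 hs, rfl⟩)
        have hd' : ∃ v, K.R w v ∧ mlSatW K (typeFormula k s) v := hd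
        obtain ⟨v, hv, hsat⟩ := hd'
        exact ⟨v, hv, (mlSatW_typeFormula K k s v).1 hsat⟩
    · rintro ⟨h0, hB⟩
      have hB' := Set.ext_iff.1 hB
      refine ⟨fun p => Set.ext_iff.1 h0 p, ?_, ?_⟩
      · intro φ hφ
        obtain ⟨s, hsB, rfl⟩ := List.mem_map.1 hφ
        have hs : s ∈ ({s | ∃ v, K.R w v ∧ typeOf K k v = s} : Set (MType Φ k)) :=
          (hB' s).2 ((mem_setList _ _).1 hsB)
        obtain ⟨v, hv, ht⟩ := hs
        show ∃ v, K.R w v ∧ mlSatW K (typeFormula k s) v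
        exact ⟨v, hv, (mlSatW_typeFormula K k s v).2 ht⟩
      · intro v hv
        rw [mlSatW_mlDisj]
        have hmem : typeOf K k v ∈ mtB t := (hB' (typeOf K k v)).1 ⟨v, hv, rfl⟩
        exact ⟨typeFormula k (typeOf K k v),
          List.mem_map.2 ⟨_, (mem_setList _ _).2 hmem, rfl⟩,
          (mlSatW_typeFormula K k _ v).2 rfl⟩

/-- Embedding of ML into MINC. -/
def emb : MLFormula Φ → MINCFormula Φ
  | .atom p => .atom p
  | .natom p => .natom p
  | .and φ ψ => .and (emb φ) (emb ψ)
  | .or φ ψ => .or (emb φ) (emb ψ)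
  | .dia φ => .dia (emb φ)
  | .box φ => .box (emb φ)

/-- Flatness of ML formulas under lax team semantics. -/
lemma mincSat_emb (K : KripkeModel Φ) : ∀ (φ : MLFormula Φ) (T : Set K.W),
    mincSat K (emb φ) T ↔ ∀ w ∈ T, mlSatW K φ w
  | .atom p, T => by
    show T ⊆ K.V p ↔ _
    simp [Set.subset_def, mlSatW]
  | .natom p, T => by
    show T ∩ K.V p = ∅ ↔ _
    simp only [Set.eq_empty_iff_forall_notMem, Set.mem_inter_iff, not_and]
    exact ⟨fun h w hw => h w hw, fun h w hw => h w hw⟩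
  | .and φ ψ, T => by
    show (mincSat K (emb φ) T ∧ mincSat K (emb ψ) T) ↔ _
    rw [mincSat_emb K φ T, mincSat_emb K ψ T]
    constructor
    · rintro ⟨h1, h2⟩ w hw
      exact ⟨h1 w hw, h2 w hw⟩
    · intro h
      exact ⟨fun w hw => (h w hw).1, fun w hw => (h w hw).2⟩
  | .or φ ψ, T => by
    show (∃ T₁ T₂, T = T₁ ∪ T₂ ∧ mincSat K (emb φ) T₁ ∧ mincSat K (emb ψ) T₂) ↔ _
    constructor
    · rintro ⟨T₁, T₂, rfl, h1, h2⟩ w hw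
      rcases hw with h | h
      · exact Or.inl ((mincSat_emb K φ T₁).1 h1 w h)
      · exact Or.inr ((mincSat_emb K ψ T₂).1 h2 w h)
    · intro h
      refine ⟨{w ∈ T | mlSatW K φ w}, {w ∈ T | mlSatW K ψ w}, ?_, ?_, ?_⟩
      · ext w
        simp only [Set.mem_union, Set.mem_sep_iff]
        constructor
        · intro hw
          rcases h w hw with hs | hs
          · exact Or.inl ⟨hw, hs⟩
          · exact Or.inr ⟨hw, hs⟩
        · rintro (⟨hw, -⟩ | ⟨hw, -⟩) <;> exact hw
      · exact (mincSat_emb K φ _).2 fun w hw => hw.2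
      · exact (mincSat_emb K ψ _).2 fun w hw => hw.2
  | .dia φ, T => by
    show (∃ S, relStep K T S ∧ mincSat K (emb φ) S) ↔ _
    constructor
    · rintro ⟨S, hrel, hsat⟩ w hw
      obtain ⟨v, hv, hr⟩ := hrel.2 hw
      exact ⟨v, hr, (mincSat_emb K φ S).1 hsat v hv⟩
    · intro h
      refine ⟨{v | (∃ w ∈ T, K.R w v) ∧ mlSatW K φ v}, ⟨?_, ?_⟩, ?_⟩
      · intro v hv
        exact hv.1
      · intro w hw
        obtain ⟨v, hr, hs⟩ := h w hw
        exact ⟨v, ⟨⟨w, hw, hr⟩, hs⟩, hr⟩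
      · exact (mincSat_emb K φ _).2 fun v hv => hv.2
  | .box φ, T => by
    show mincSat K (emb φ) (img K T) ↔ _
    rw [mincSat_emb K φ (img K T)]
    constructor
    · intro h w hw v hr
      exact h v ⟨w, hw, hr⟩
    · rintro h v ⟨w, hw, hr⟩
      exact h w hw v hr

/-- Disjunction, in MINC, of a list of ML formulas. -/
noncomputable def mdisj [Nonempty Φ] : List (MLFormula Φ) → MINCFormula Φ
  | [] => emb (mlBot Φ)
  | φ :: l => .or (emb φ) (mdisj l)

lemma mincSat_mdisj [Nonempty Φ] (K : KripkeModel Φ) :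
    ∀ (L : List (MLFormula Φ)) (T : Set K.W),
    mincSat K (mdisj L) T ↔ ∀ w ∈ T, ∃ φ ∈ L, mlSatW K φ w
  | [], T => by
    rw [show mdisj ([] : List (MLFormula Φ)) = emb (mlBot Φ) from rfl, mincSat_emb]
    constructor
    · intro h w hw
      exact absurd (h w hw) (mlSatW_mlBot K w)
    · intro h w hw
      obtain ⟨φ, hφ, -⟩ := h w hw
      exact absurd hφ List.not_mem_nil
  | φ :: l, T => by
    rw [show mdisj (φ :: l) = .or (emb φ) (mdisj l) from rfl]
    show (∃ T₁ T₂, T = T₁ ∪ T₂ ∧ mincSat K (emb φ) T₁ ∧ mincSat K (mdisj l) T₂) ↔ _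
    constructor
    · rintro ⟨T₁, T₂, rfl, h1, h2⟩ w hw
      rcases hw with h | h
      · exact ⟨φ, List.mem_cons_self, (mincSat_emb K φ T₁).1 h1 w h⟩
      · obtain ⟨ψ, hψ, hs⟩ := (mincSat_mdisj K l T₂).1 h2 w h
        exact ⟨ψ, List.mem_cons_of_mem φ hψ, hs⟩
    · intro h
      refine ⟨{w ∈ T | mlSatW K φ w}, {w ∈ T | ∃ ψ ∈ l, mlSatW K ψ w}, ?_, ?_, ?_⟩
      · ext w
        simp only [Set.mem_union, Set.mem_sep_iff]
        constructor
        · intro hw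
          obtain ⟨ψ, hψ, hs⟩ := h w hw
          rcases List.mem_cons.1 hψ with rfl | hm
          · exact Or.inl ⟨hw, hs⟩
          · exact Or.inr ⟨hw, ψ, hm, hs⟩
        · rintro (⟨hw, -⟩ | ⟨hw, -⟩) <;> exact hw
      · exact (mincSat_emb K φ _).2 fun w hw => hw.2
      · exact (mincSat_mdisj K l _).2 fun w hw => hw.2

/-- Conjunction of a list of MINC formulas. -/
def mconj : List (MINCFormula Φ) → MINCFormula Φ
  | [] => .inc [] []
  | φ :: l => .and φ (mconj l)

lemma mincSat_mconj (K : KripkeModel Φ) :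
    ∀ (L : List (MINCFormula Φ)) (T : Set K.W),
    mincSat K (mconj L) T ↔ ∀ φ ∈ L, mincSat K φ T
  | [], T => by
    constructor
    · intro _ φ hφ
      exact absurd hφ List.not_mem_nil
    · intro _
      show ∀ w ∈ T, ∃ v ∈ T, ∀ pr ∈ List.zip ([] : List (MLFormula Φ)) [], _
      intro w hw
      exact ⟨w, hw, fun pr hpr => absurd hpr List.not_mem_nil⟩
  | φ :: l, T => by
    show (mincSat K φ T ∧ mincSat K (mconj l) T) ↔ _
    rw [mincSat_mconj K l T]
    constructor
    · rintro ⟨h1, h2⟩ ψ hψ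
      rcases List.mem_cons.1 hψ with rfl | hm
      · exact h1
      · exact h2 ψ hm
    · intro h
      exact ⟨h φ (List.mem_cons_self), fun ψ hm => h ψ (List.mem_cons_of_mem φ hm)⟩

end Aux


/-- Team-bisimilarity definability in MINC: there is a MINC formula satisfied by
`(K',T')` exactly when `K,T [⇄_k] K',T'` or `T' = ∅`. -/
theorem teamBisim_definable_minc [Fintype Φ] [Nonempty Φ] (k : ℕ)
    (K : KripkeModel Φ) (T : Set K.W) :
    ∃ ψ : MINCFormula Φ,
      ∀ (K' : KripkeModel Φ) (T' : Set K'.W),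
        mincSat K' ψ T' ↔ (teamBisim K K' k T T' ∨ T' = ∅) := by
  classical
  by_cases hT : T = ∅
  · subst hT
    refine ⟨emb (mlBot Φ), fun K' T' => ?_⟩
    rw [mincSat_emb]
    constructor
    · intro h
      right
      ext w
      simp only [Set.mem_empty_iff_false, iff_false]
      intro hw
      exact mlSatW_mlBot K' w (h w hw)
    · rintro (h | rfl)
      · intro w hw
        obtain ⟨u, hu, -⟩ := h.2 w hw
        exact absurd hu (Set.notMem_empty u)
      · intro w hw
        exact absurd hw (Set.notMem_empty w)
  · set RL : List (MType Φ k) := setList {t | ∃ u ∈ T, typeOf K k u = t} with hRLdef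
    have hRL : ∀ t, t ∈ RL ↔ ∃ u ∈ T, typeOf K k u = t := fun t =>
      mem_setList {t | ∃ u ∈ T, typeOf K k u = t} t
    refine ⟨.and (mdisj (RL.map (typeFormula k)))
      (mconj (RL.map fun t => mconj (RL.map fun s =>
        .inc [typeFormula k t] [typeFormula k s]))), fun K' T' => ?_⟩
    have hsem : mincSat K' (.and (mdisj (RL.map (typeFormula k)))
        (mconj (RL.map fun t => mconj (RL.map fun s =>
          MINCFormula.inc [typeFormula k t] [typeFormula k s]))) ) T' ↔
        mincSat K' (mdisj (RL.map (typeFormula k))) T' ∧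
        mincSat K' (mconj (RL.map fun t => mconj (RL.map fun s =>
          MINCFormula.inc [typeFormula k t] [typeFormula k s]))) T' := Iff.rfl
    rw [hsem, mincSat_mdisj, mincSat_mconj]
    have hincsem : ∀ (t s : MType Φ k),
        mincSat K' (.inc [typeFormula k t] [typeFormula k s]) T' ↔
        ∀ w ∈ T', ∃ v ∈ T',
          (mlSatW K' (typeFormula k t) w ↔ mlSatW K' (typeFormula k s) v) := by
      intro t s
      show (∀ w ∈ T', ∃ v ∈ T', ∀ pr ∈ List.zip [typeFormula k t] [typeFormula k s],
        (mlSatW K' pr.1 w ↔ mlSatW K' pr.2 v)) ↔ _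
      rw [show List.zip [typeFormula k t] [typeFormula k s] =
        [(typeFormula k t, typeFormula k s)] from rfl]
      constructor
      · intro h w hw
        obtain ⟨v, hv, hiff⟩ := h w hw
        exact ⟨v, hv, hiff _ (List.mem_singleton.2 rfl)⟩
      · intro h w hw
        obtain ⟨v, hv, hiff⟩ := h w hw
        refine ⟨v, hv, ?_⟩
        intro pr hpr
        rw [List.mem_singleton.1 hpr]
        exact hiff
    constructor
    · rintro ⟨hdisj, hconj⟩
      by_cases hT' : T' = ∅
      · exact Or.inr hT'
      left
      obtain ⟨w₀', hw₀'⟩ := Set.nonempty_iff_ne_empty.2 hT'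
      have back : ∀ w' ∈ T', ∃ w ∈ T, bisim K K' k w w' := by
        intro w' hw'
        obtain ⟨φ, hφ, hs⟩ := hdisj w' hw'
        obtain ⟨t, htR, rfl⟩ := List.mem_map.1 hφ
        obtain ⟨u, hu, hut⟩ := (hRL t).1 htR
        have hwt : typeOf K' k w' = t := (mlSatW_typeFormula K' k t w').1 hs
        exact ⟨u, hu, (typeOf_eq_iff_bisim K K' k u w').1 (hut.trans hwt.symm)⟩
      refine ⟨?_, back⟩
      intro u hu
      obtain ⟨φ, hφ, hs⟩ := hdisj w₀' hw₀'
      obtain ⟨t₀, ht₀R, rfl⟩ := List.mem_map.1 hφ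
      have hw₀t : typeOf K' k w₀' = t₀ := (mlSatW_typeFormula K' k t₀ w₀').1 hs
      have htuR : typeOf K k u ∈ RL := (hRL _).2 ⟨u, hu, rfl⟩
      have houter := hconj _ (List.mem_map.2 ⟨t₀, ht₀R, rfl⟩)
      rw [mincSat_mconj] at houter
      have hinc := houter _ (List.mem_map.2 ⟨typeOf K k u, htuR, rfl⟩)
      rw [hincsem] at hinc
      obtain ⟨v, hv, hiff⟩ := hinc w₀' hw₀'
      have h2 : mlSatW K' (typeFormula k (typeOf K k u)) v :=
        hiff.1 ((mlSatW_typeFormula K' k t₀ w₀').2 hw₀t)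
      have h3 : typeOf K' k v = typeOf K k u := (mlSatW_typeFormula K' k _ v).1 h2
      exact ⟨v, hv, (typeOf_eq_iff_bisim K K' k u v).1 h3.symm⟩
    · rintro (hbis | rfl)
      · have hfwd := hbis.1
        have hbwd := hbis.2
        have real : ∀ r ∈ RL, ∃ v ∈ T', typeOf K' k v = r := by
          intro r hr
          obtain ⟨u, hu, rfl⟩ := (hRL r).1 hr
          obtain ⟨v, hv, hb⟩ := hfwd u hu
          exact ⟨v, hv, ((typeOf_eq_iff_bisim K K' k u v).2 hb).symm⟩
        constructor
        · intro w' hw'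
          obtain ⟨u, hu, hb⟩ := hbwd w' hw'
          refine ⟨typeFormula k (typeOf K k u),
            List.mem_map.2 ⟨_, (hRL _).2 ⟨u, hu, rfl⟩, rfl⟩, ?_⟩
          exact (mlSatW_typeFormula K' k _ w').2
            ((typeOf_eq_iff_bisim K K' k u w').2 hb).symm
        · intro φ hφ
          obtain ⟨t, htR, rfl⟩ := List.mem_map.1 hφ
          rw [mincSat_mconj]
          intro ψ hψ
          obtain ⟨s, hsR, rfl⟩ := List.mem_map.1 hψ
          rw [hincsem]
          intro w' hw'
          by_cases hwt : typeOf K' k w' = t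
          · obtain ⟨v, hv, hvs⟩ := real s hsR
            refine ⟨v, hv, ?_⟩
            constructor
            · intro _
              exact (mlSatW_typeFormula K' k s v).2 hvs
            · intro _
              exact (mlSatW_typeFormula K' k t w').2 hwt
          · by_cases hts : t = s
            · subst hts
              exact ⟨w', hw', Iff.rfl⟩
            · obtain ⟨v, hv, hvt⟩ := real t htR
              refine ⟨v, hv, ?_⟩
              constructor
              · intro h
                exact absurd ((mlSatW_typeFormula K' k t w').1 h) hwt
              · intro h
                exact absurd (hvt.symm.trans ((mlSatW_typeFormula K' k s v).1 h)) hts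
      · constructor
        · intro w hw
          exact absurd hw (Set.notMem_empty w)
        · intro φ hφ
          obtain ⟨t, -, rfl⟩ := List.mem_map.1 hφ
          rw [mincSat_mconj]
          intro ψ hψ
          obtain ⟨s, -, rfl⟩ := List.mem_map.1 hψ
          rw [hincsem]
          intro w hw
          exact absurd hw (Set.notMem_empty w)

end TeamSem
end
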